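/- For every fixed w ∈ (0,∞)^k and θ ∈ ℝ, the log-likelihood l(w, θ, σ²) remains finite as σ² → 0⁺: the limit lim_{σ²→0⁺} l(w, θ, σ²) exists, equals l(w, θ, 0), and is a finite real number. -/

import Mathlib

open MeasureTheory Real Set Filter Topology

/-- Standard normal density. -/
noncomputable def stdPhi (z : ℝ) : ℝ := (Real.sqrt (2 * Real.pi))⁻¹ * Real.exp (-z ^ 2 / 2)

/-- `η_i = √(u_i² + σ²)`. -/
noncomputable def etaFn (u sigma2 : ℝ) : ℝ := Real.sqrt (u ^ 2 + sigma2)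

/-- The cell probability `H`: Gaussian `N(θ, η²)` integral over the annulus
`{y : b ≤ |y| < b'}`, with (possibly infinite) extended-real thresholds. -/
noncomputable def cellH (b b' : EReal) (u θ sigma2 : ℝ) : ℝ :=
  ∫ x in {x : ℝ | b ≤ ((|x| : ℝ) : EReal) ∧ ((|x| : ℝ) : EReal) < b'},
    (etaFn u sigma2)⁻¹ * stdPhi ((x - θ) / etaFn u sigma2)

/-- The log-likelihood `l(w, θ, σ²)` of Dear–Begg selection models. For study `i`
the thresholds on the outcome scale are `b i 0 = 0 ≤ b i 1 ≤ … ≤ b i k = ∞`. -/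
noncomputable def loglik {n k : ℕ} (y u : Fin n → ℝ) (lam : Fin k → ℝ)
    (b : Fin n → ℕ → EReal) (w : Fin k → ℝ) (θ sigma2 : ℝ) : ℝ :=
  -((n : ℝ) / 2) * Real.log (2 * Real.pi)
    + ∑ j, lam j * Real.log (w j)
    - ∑ i, Real.log (etaFn (u i) sigma2)
    - (1 / 2) * ∑ i, ((y i - θ) / etaFn (u i) sigma2) ^ 2
    - ∑ i, Real.log (∑ j : Fin k, w j * cellH (b i (j : ℕ)) (b i ((j : ℕ) + 1)) (u i) θ sigma2)

lemma stdPhi_nonneg (z : ℝ) : 0 ≤ stdPhi z := by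
  unfold stdPhi; positivity

lemma continuous_stdPhi : Continuous stdPhi := by
  unfold stdPhi; fun_prop

lemma eta_pos {u : ℝ} (hu : 0 < u) {s : ℝ} (hs : 0 ≤ s) : 0 < etaFn u s :=
  Real.sqrt_pos.2 (by positivity)

lemma eta_sq {u s : ℝ} (hs : 0 ≤ u ^ 2 + s) : (etaFn u s) ^ 2 = u ^ 2 + s :=
  Real.sq_sqrt hs

lemma eta_ge {u : ℝ} (hu : 0 < u) {s : ℝ} (hs : 0 ≤ s) : u ≤ etaFn u s := by
  rw [etaFn, show u ^ 2 + s = u^2 + s from rfl]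
  nlinarith [Real.sq_sqrt (by positivity : (0:ℝ) ≤ u^2+s), Real.sqrt_nonneg (u^2+s)]

lemma eta_tendsto (u : ℝ) : Tendsto (fun s => etaFn u s) (𝓝[>] (0:ℝ)) (𝓝 (etaFn u 0)) := by
  have h : Continuous fun s => etaFn u s :=
    Real.continuous_sqrt.comp (continuous_const.add continuous_id)
  exact (h.tendsto 0).mono_left nhdsWithin_le_nhds

lemma measurableSet_annulus (b b' : EReal) :
    MeasurableSet {x : ℝ | b ≤ ((|x| : ℝ) : EReal) ∧ ((|x| : ℝ) : EReal) < b'} := by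
  have : {x : ℝ | b ≤ ((|x| : ℝ) : EReal) ∧ ((|x| : ℝ) : EReal) < b'}
      = (fun x : ℝ => ((|x| : ℝ) : EReal)) ⁻¹' (Set.Ico b b') := rfl
  rw [this]
  exact (measurable_coe_real_ereal.comp measurable_abs) measurableSet_Ico

lemma integrable_density {u : ℝ} (hu : 0 < u) {s : ℝ} (hs : 0 ≤ s) (θ : ℝ) :
    Integrable (fun x : ℝ => (etaFn u s)⁻¹ * stdPhi ((x - θ) / etaFn u s)) := by
  have hη : 0 < etaFn u s := eta_pos hu hs
  have hb : (0:ℝ) < 1 / (2 * (etaFn u s) ^ 2) := by positivity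
  have h1 : Integrable (fun x : ℝ => Real.exp (-(1 / (2 * (etaFn u s) ^ 2)) * (x - θ) ^ 2)) :=
    (integrable_exp_neg_mul_sq hb).comp_sub_right θ
  have := (h1.const_mul ((etaFn u s)⁻¹ * (Real.sqrt (2 * Real.pi))⁻¹))
  refine this.congr (Eventually.of_forall fun x => ?_)
  unfold stdPhi
  simp only
  rw [div_pow, mul_assoc]
  congr 2
  rw [eta_sq (by positivity)]
  field_simp


lemma cellH_nonneg (b b' : EReal) (u θ s : ℝ) : 0 ≤ cellH b b' u θ s := by
  refine setIntegral_nonneg (measurableSet_annulus b b') fun x _ => ?_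
  have : 0 ≤ (etaFn u s)⁻¹ := inv_nonneg.2 (Real.sqrt_nonneg _)
  exact mul_nonneg this (stdPhi_nonneg _)

lemma cellH_pos {b' : EReal} (hb' : 0 < b') {u : ℝ} (hu : 0 < u) (θ : ℝ) :
    0 < cellH 0 b' u θ 0 := by
  obtain ⟨c, hc0, hcb⟩ := EReal.lt_iff_exists_real_btwn.1 hb'
  have hc0' : (0:ℝ) < c := by exact_mod_cast hc0
  have hη : 0 < etaFn u 0 := eta_pos hu le_rfl
  set f : ℝ → ℝ := fun x => (etaFn u 0)⁻¹ * stdPhi ((x - θ) / etaFn u 0) with hf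
  have hfpos : ∀ x, 0 < f x := by
    intro x
    have : 0 < stdPhi ((x - θ) / etaFn u 0) := by unfold stdPhi; positivity
    exact mul_pos (inv_pos.2 hη) this
  have hint : Integrable f := integrable_density hu le_rfl θ
  have hsub : Set.Ico (0:ℝ) c ⊆
      {x : ℝ | (0:EReal) ≤ ((|x| : ℝ) : EReal) ∧ ((|x| : ℝ) : EReal) < b'} := by
    rintro x ⟨hx0, hxc⟩
    simp only [Set.mem_setOf_eq, abs_of_nonneg hx0]
    constructor
    · exact_mod_cast hx0
    · exact lt_of_lt_of_le (by exact_mod_cast hxc) hcb.le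
  have h1 : ∫ x in Set.Ico (0:ℝ) c, f x ≤ cellH 0 b' u θ 0 := by
    refine setIntegral_mono_set (hint.integrableOn) ?_ (Eventually.of_forall hsub)
    exact Eventually.of_forall fun x => (hfpos x).le
  refine lt_of_lt_of_le ?_ h1
  rw [show (volume : Measure ℝ).restrict (Set.Ico 0 c) = volume.restrict (Set.Ioc 0 c) from
    MeasureTheory.restrict_Ico_eq_restrict_Ioc, ← intervalIntegral.integral_of_le hc0'.le]
  exact intervalIntegral.intervalIntegral_pos_of_pos_on hint.intervalIntegrable
    (fun x _ => hfpos x) hc0'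

lemma cellH_tendsto (b b' : EReal) {u : ℝ} (hu : 0 < u) (θ : ℝ) :
    Tendsto (fun s => cellH b b' u θ s) (𝓝[>] (0:ℝ)) (𝓝 (cellH b b' u θ 0)) := by
  unfold cellH
  set S := {x : ℝ | b ≤ ((|x| : ℝ) : EReal) ∧ ((|x| : ℝ) : EReal) < b'}
  refine tendsto_integral_filter_of_dominated_convergence
    (fun x => u⁻¹ * ((Real.sqrt (2 * Real.pi))⁻¹ * Real.exp (-(x - θ)^2 / (2 * (u^2 + 1)))))
    ?_ ?_ ?_ ?_
  · refine Eventually.of_forall fun s => ?_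
    have hc : Continuous fun x : ℝ => (etaFn u s)⁻¹ * stdPhi ((x - θ) / etaFn u s) := by
      exact continuous_const.mul (continuous_stdPhi.comp ((continuous_id.sub continuous_const).div_const _))
    exact hc.aestronglyMeasurable.restrict
  · filter_upwards [Ioc_mem_nhdsGT_of_mem (by constructor <;> norm_num : (0:ℝ) ∈ Set.Ico (0:ℝ) 1)]
      with s hs
    refine Eventually.of_forall fun x => ?_
    have hs0 : 0 < s := hs.1
    have hη : 0 < etaFn u s := eta_pos hu hs0.le
    have hηsq : (etaFn u s) ^ 2 = u ^ 2 + s := eta_sq (by positivity)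
    have huη : u ≤ etaFn u s := eta_ge hu hs0.le
    have h1 : (etaFn u s)⁻¹ ≤ u⁻¹ := inv_anti₀ hu huη
    have h2 : stdPhi ((x - θ) / etaFn u s)
        ≤ (Real.sqrt (2 * Real.pi))⁻¹ * Real.exp (-(x - θ)^2 / (2 * (u^2 + 1))) := by
      unfold stdPhi
      refine mul_le_mul_of_nonneg_left (Real.exp_le_exp.2 ?_) (by positivity)
      rw [div_pow, hηsq]
      rw [neg_div, neg_div, neg_le_neg_iff, div_div]
      refine div_le_div_of_nonneg_left (by positivity) (by positivity) ?_
      nlinarith [hs.2]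
    have hnn : 0 ≤ (etaFn u s)⁻¹ * stdPhi ((x - θ) / etaFn u s) :=
      mul_nonneg (inv_nonneg.2 hη.le) (stdPhi_nonneg _)
    rw [Real.norm_of_nonneg hnn]
    exact mul_le_mul h1 h2 (stdPhi_nonneg _) (by positivity)
  · have hb : (0:ℝ) < 1 / (2 * (u^2 + 1)) := by positivity
    have h1 : Integrable (fun x : ℝ => Real.exp (-(1 / (2 * (u^2+1))) * (x - θ) ^ 2)) :=
      (integrable_exp_neg_mul_sq hb).comp_sub_right θ
    have h2 := (h1.const_mul (u⁻¹ * (Real.sqrt (2 * Real.pi))⁻¹))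
    refine Integrable.restrict (h2.congr (Eventually.of_forall fun x => ?_))
    simp only
    rw [mul_assoc]
    congr 2
    field_simp
  · refine Eventually.of_forall fun x => ?_
    have hη0 : etaFn u 0 ≠ 0 := (eta_pos hu le_rfl).ne'
    have hc : ContinuousAt (fun s => (etaFn u s)⁻¹ * stdPhi ((x - θ) / etaFn u s)) 0 := by
      have hη : Continuous fun s => etaFn u s :=
        Real.continuous_sqrt.comp (continuous_const.add continuous_id)
      exact ((hη.continuousAt.inv₀ hη0).mul
        (continuous_stdPhi.continuousAt.comp
          ((continuousAt_const.div hη.continuousAt hη0))))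
    exact hc.continuousWithinAt.tendsto

lemma A_pos {k : ℕ} (hk : 1 ≤ k) (b : ℕ → EReal) (hb0 : b 0 = 0) (hbk : b k = ⊤)
    (hmono : Monotone b) {u : ℝ} (hu : 0 < u) (θ : ℝ) (w : Fin k → ℝ) (hw : ∀ j, 0 < w j) :
    0 < ∑ j : Fin k, w j * cellH (b (j : ℕ)) (b ((j : ℕ) + 1)) u θ 0 := by
  classical
  set P : ℕ → Prop := fun j => b j ≤ 0 with hP
  set m := Nat.findGreatest P (k - 1) with hm
  have hP0 : P 0 := le_of_eq hb0
  have hPm : P m := Nat.findGreatest_spec (Nat.zero_le _) hP0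
  have hmk : m < k := lt_of_le_of_lt (Nat.findGreatest_le _) (Nat.sub_lt hk one_pos)
  have hbm : b m = 0 := le_antisymm hPm (hb0 ▸ hmono (Nat.zero_le m))
  have hbm1 : 0 < b (m + 1) := by
    rcases lt_or_ge m (k - 1) with h | h
    · have hnot : ¬ P (m + 1) := Nat.findGreatest_is_greatest (Nat.lt_succ_self m) h
      exact lt_of_not_ge hnot
    · have : m + 1 = k := by omega
      rw [this, hbk]; exact lt_of_le_of_ne le_top (by simp)
  have hcell : 0 < cellH (b m) (b (m + 1)) u θ 0 := by
    rw [hbm]; exact cellH_pos hbm1 hu θ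
  refine Finset.sum_pos' (fun j _ => mul_nonneg (hw j).le (cellH_nonneg _ _ _ _ _)) ?_
  exact ⟨⟨m, hmk⟩, Finset.mem_univ _, mul_pos (hw _) hcell⟩

/-- for fixed `w ∈ (0,∞)^k` and `θ`, the log-likelihood stays finite
as `σ² → 0⁺`: its limit exists and equals the (finite real) value `l(w, θ, 0)`. -/
theorem loglik_tendsto_at_sigma_zero
    {n k : ℕ} (hn : 1 ≤ n) (hk : 1 ≤ k)
    (y u : Fin n → ℝ) (hu : ∀ i, 0 < u i)
    (lam : Fin k → ℝ) (hlam : ∀ j, 0 < lam j)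
    (b : Fin n → ℕ → EReal)
    (hb0 : ∀ i, b i 0 = 0) (hbk : ∀ i, b i k = ⊤)
    (hbmono : ∀ i, Monotone (b i))
    (hblt : ∀ i, ∀ j, j < k → b i j ≠ ⊤)
    (w : Fin k → ℝ) (hw : ∀ j, 0 < w j) (θ : ℝ) :
    Tendsto (fun sigma2 => loglik y u lam b w θ sigma2) (𝓝[>] (0 : ℝ))
      (𝓝 (loglik y u lam b w θ 0)) := by
  have hη0 : ∀ i, 0 < etaFn (u i) 0 := fun i => eta_pos (hu i) le_rfl
  have h3 : Tendsto (fun s => ∑ i, Real.log (etaFn (u i) s)) (𝓝[>] (0:ℝ))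
      (𝓝 (∑ i, Real.log (etaFn (u i) 0))) :=
    tendsto_finset_sum _ fun i _ => (eta_tendsto (u i)).log (hη0 i).ne'
  have h4 : Tendsto (fun s => (1/2 : ℝ) * ∑ i, ((y i - θ) / etaFn (u i) s) ^ 2) (𝓝[>] (0:ℝ))
      (𝓝 ((1/2 : ℝ) * ∑ i, ((y i - θ) / etaFn (u i) 0) ^ 2)) :=
    tendsto_const_nhds.mul (tendsto_finset_sum _ fun i _ =>
      (Tendsto.div tendsto_const_nhds (eta_tendsto (u i)) (hη0 i).ne').pow 2)
  have h5 : Tendsto (fun s => ∑ i, Real.log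
        (∑ j : Fin k, w j * cellH (b i (j : ℕ)) (b i ((j : ℕ) + 1)) (u i) θ s)) (𝓝[>] (0:ℝ))
      (𝓝 (∑ i, Real.log
        (∑ j : Fin k, w j * cellH (b i (j : ℕ)) (b i ((j : ℕ) + 1)) (u i) θ 0))) := by
    refine tendsto_finset_sum _ fun i _ => Tendsto.log ?_ ?_
    · exact tendsto_finset_sum _ fun j _ =>
        tendsto_const_nhds.mul (cellH_tendsto _ _ (hu i) θ)
    · exact (A_pos hk (b i) (hb0 i) (hbk i) (hbmono i) (hu i) θ w hw).ne'
  unfold loglik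
  exact ((tendsto_const_nhds.sub h3).sub h4).sub h5
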